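/- arXiv:1909.11820 — 2 statements merged into one kernel-verified Lean document; each statement's English description precedes it below -/
import Mathlib

section
/- Let f : X × Θ → ℝ with X ⊆ ℝ^d, Θ ⊆ ℝ^p, such that f(y; ·) is differentiable in θ for each y. Fix β > 0 and define M(θ) = inf_{y∈X} { ‖x−y‖²/(2β) + f(y;θ) } for a fixed x, and suppose the infimum is attained at Prox(θ). If M is differentiable at θ, then ‖∇_θ M(θ)‖₂ ≤ ‖∇_θ f(Prox(θ); θ)‖₂. -/
open Set Filter Topology

/-- Moreau envelope of a parametric function: if the envelope
`M(θ) = inf_{y∈X} ‖x−y‖²/(2β) + f(y;θ)` is differentiable at `θ₀` and the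
infimum is attained at `Prox θ₀`, then the gradient of `M` is bounded in norm
by the norm of `∇_θ f(Prox θ₀; θ₀)`. -/
theorem gradient_moreau_envelope_parametric
    {d p : ℕ} (X : Set (EuclideanSpace ℝ (Fin d)))
    (f : EuclideanSpace ℝ (Fin d) → EuclideanSpace ℝ (Fin p) → ℝ)
    (β : ℝ) (hβ : 0 < β)
    (x : EuclideanSpace ℝ (Fin d)) (θ₀ : EuclideanSpace ℝ (Fin p))
    (M : EuclideanSpace ℝ (Fin p) → ℝ)
    (hM : ∀ θ, M θ = sInf ((fun y => ‖x - y‖ ^ 2 / (2 * β) + f y θ) '' X))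
    (Prox : EuclideanSpace ℝ (Fin p) → EuclideanSpace ℝ (Fin d))
    (hProxMem : ∀ θ, Prox θ ∈ X)
    (hProxAttain : ∀ θ, M θ = ‖x - Prox θ‖ ^ 2 / (2 * β) + f (Prox θ) θ)
    (hfdiff : ∀ y, Differentiable ℝ (f y))
    (gM : EuclideanSpace ℝ (Fin p)) (hgM : HasGradientAt M gM θ₀) :
    ‖gM‖ ≤ ‖gradient (f (Prox θ₀)) θ₀‖ := by
  by_cases hg : gM = 0
  · simp [hg]
  set y₀ := Prox θ₀ with hy₀
  set gf := gradient (f y₀) θ₀ with hgf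
  have hgMnorm : (0:ℝ) < ‖gM‖ := norm_pos_iff.mpr hg
  set u : EuclideanSpace ℝ (Fin p) := ‖gM‖⁻¹ • gM with hu
  have hunorm : ‖u‖ = 1 := by
    rw [hu, norm_smul, norm_inv, norm_norm, inv_mul_cancel₀ (ne_of_gt hgMnorm)]
  set c : ℝ → EuclideanSpace ℝ (Fin p) := fun t => θ₀ + t • u with hc
  have hc0 : c 0 = θ₀ := by simp [hc]
  have hcd : HasDerivAt c u 0 := by
    simpa [hc] using ((hasDerivAt_id (0:ℝ)).smul_const u).const_add θ₀
  -- directional derivative of M along u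
  have hψ : HasDerivAt (fun t => M (c t)) ‖gM‖ 0 := by
    have h1 : HasDerivAt (fun t => M (c t)) ((InnerProductSpace.toDual ℝ _ gM) u) 0 := by
      have := hgM.hasFDerivAt
      rw [← hc0] at this
      exact this.comp_hasDerivAt 0 hcd
    have : (InnerProductSpace.toDual ℝ _ gM) u = ‖gM‖ := by
      simp only [InnerProductSpace.toDual_apply_apply, hu, real_inner_smul_right,
        real_inner_self_eq_norm_sq]
      field_simp
    rwa [this] at h1
  -- directional derivative of the upper bound along u
  have hφ : HasDerivAt (fun t => ‖x - y₀‖ ^ 2 / (2 * β) + f y₀ (c t))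
      (inner ℝ gf u : ℝ) 0 := by
    have h1 : HasDerivAt (fun t => f y₀ (c t)) ((InnerProductSpace.toDual ℝ _ gf) u) 0 := by
      have hgrad : HasGradientAt (f y₀) gf θ₀ := (hfdiff y₀ θ₀).hasGradientAt
      have h2 := hgrad.hasFDerivAt
      rw [← hc0] at h2
      exact h2.comp_hasDerivAt 0 hcd
    simpa [InnerProductSpace.toDual_apply_apply] using h1.const_add (‖x - y₀‖ ^ 2 / (2 * β))
  -- key pointwise bound when the infimizing set is bounded below
  have key : ∀ t : ℝ, BddBelow ((fun y => ‖x - y‖ ^ 2 / (2 * β) + f y (c t)) '' X) →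
      M (c t) ≤ ‖x - y₀‖ ^ 2 / (2 * β) + f y₀ (c t) := by
    intro t hbdd
    rw [hM (c t)]
    exact csInf_le hbdd ⟨y₀, hProxMem θ₀, rfl⟩
  by_cases hP : ∃ ε > (0:ℝ), ∀ t ∈ Ioo (0:ℝ) ε,
      BddBelow ((fun y => ‖x - y‖ ^ 2 / (2 * β) + f y (c t)) '' X)
  · -- bounded-below case: standard one-sided derivative comparison
    obtain ⟨ε, hε, hbdd⟩ := hP
    set φ : ℝ → ℝ := fun t => ‖x - y₀‖ ^ 2 / (2 * β) + f y₀ (c t) with hφdef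
    set ψ : ℝ → ℝ := fun t => M (c t) with hψdef
    have heq0 : ψ 0 = φ 0 := by
      simp only [ψ, φ, hc0]
      exact hProxAttain θ₀
    have hder : HasDerivAt (fun t => φ t - ψ t) ((inner ℝ gf u : ℝ) - ‖gM‖) 0 := hφ.sub hψ
    have hslope : Tendsto (slope (fun t => φ t - ψ t) 0) (𝓝[>] (0:ℝ))
        (𝓝 ((inner ℝ gf u : ℝ) - ‖gM‖)) := by
      have := hasDerivAt_iff_tendsto_slope.mp hder
      exact this.mono_left (nhdsWithin_mono 0 (fun y hy => ne_of_gt hy))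
    have hnonneg : ∀ᶠ t in 𝓝[>] (0:ℝ), 0 ≤ slope (fun t => φ t - ψ t) 0 t := by
      filter_upwards [Ioo_mem_nhdsGT_of_mem ⟨le_refl (0:ℝ), hε⟩] with t ht
      have h1 : ψ t ≤ φ t := key t (hbdd t ht)
      have heq : slope (fun t => φ t - ψ t) 0 t = ((φ t - ψ t) - (φ 0 - ψ 0)) / t := by
        rw [slope_def_field]; ring_nf
      rw [heq, heq0]
      exact div_nonneg (by linarith) (le_of_lt ht.1)
    have hge : (0:ℝ) ≤ (inner ℝ gf u : ℝ) - ‖gM‖ :=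
      ge_of_tendsto hslope hnonneg
    have hCS : (inner ℝ gf u : ℝ) ≤ ‖gf‖ := by
      calc (inner ℝ gf u : ℝ) ≤ ‖gf‖ * ‖u‖ := real_inner_le_norm gf u
        _ = ‖gf‖ := by rw [hunorm, mul_one]
    linarith
  · -- degenerate case: unbounded sets accumulate, forcing `gM = 0`
    push_neg at hP
    set T : Set ℝ := {t | ¬ BddBelow ((fun y => ‖x - y‖ ^ 2 / (2 * β) + f y (c t)) '' X)}
      with hT
    have hL : (𝓝[>] (0:ℝ) ⊓ 𝓟 T).NeBot := by
      rw [Filter.inf_principal_neBot_iff]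
      intro s hs
      obtain ⟨ε, hε, hsub⟩ := (nhdsGT_basis (0:ℝ)).mem_iff.mp hs
      obtain ⟨t, ht, hnb⟩ := hP ε hε
      exact ⟨t, hsub ht, hnb⟩
    set L := 𝓝[>] (0:ℝ) ⊓ 𝓟 T with hLdef
    have hL1 : L ≤ 𝓝[≠] (0:ℝ) :=
      le_trans inf_le_left (nhdsWithin_mono 0 (fun y hy => ne_of_gt hy))
    have hslope : Tendsto (slope (fun t => M (c t)) 0) L (𝓝 ‖gM‖) :=
      (hasDerivAt_iff_tendsto_slope.mp hψ).mono_left hL1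
    have hMc0 : ∀ᶠ t in L, M (c t) = 0 := by
      rw [hLdef]
      refine eventually_inf_principal.mpr (Eventually.of_forall fun t ht => ?_)
      rw [hM (c t)]
      exact Real.sInf_of_not_bddBelow ht
    have hslope_eq : ∀ᶠ t in L, slope (fun t => M (c t)) 0 t = -M θ₀ * t⁻¹ := by
      filter_upwards [hMc0] with t ht
      rw [slope_def_field, ht, hc0]
      ring
    have htend0 : Tendsto (fun t : ℝ => t) L (𝓝 0) :=
      (le_trans hL1 nhdsWithin_le_nhds : L ≤ 𝓝 0)
    have hmul : Tendsto (fun t : ℝ => slope (fun t => M (c t)) 0 t * t) L (𝓝 (‖gM‖ * 0)) :=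
      hslope.mul htend0
    have hne : ∀ᶠ t in L, t ≠ (0:ℝ) := hL1 self_mem_nhdsWithin
    have hconst : ∀ᶠ t in L, slope (fun t => M (c t)) 0 t * t = -M θ₀ := by
      filter_upwards [hslope_eq, hne] with t ht htne
      rw [ht]
      field_simp
    have h1 : Tendsto (fun _ : ℝ => -M θ₀) L (𝓝 (‖gM‖ * 0)) := hmul.congr' hconst
    have hMθ₀ : M θ₀ = 0 := by
      have h2 := tendsto_nhds_unique tendsto_const_nhds h1
      rw [mul_zero] at h2
      linarith
    have h3 : Tendsto (fun _ : ℝ => (0:ℝ)) L (𝓝 ‖gM‖) := by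
      refine hslope.congr' ?_
      filter_upwards [hslope_eq] with t ht
      rw [ht, hMθ₀]
      ring
    have h4 : (0:ℝ) = ‖gM‖ := tendsto_nhds_unique tendsto_const_nhds h3
    rw [← h4]
    exact norm_nonneg _
end

section
/- Let u ∈ L^∞₊[0,T] satisfy u(t) ≤ c₀ + ∫₀ᵗ ( c₁ u(s) + c₂ u(s)² ) ds for a.e. t ∈ [0,T], where c₀, c₁, c₂ ≥ 0 are constants. If ∫₀ᵀ c₂ u(s) ds ≤ M, then u(t) ≤ c₀ · exp(c₁ t) · exp(M) for a.e. t ∈ [0,T]. -/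
open MeasureTheory Real

/-- Fubini swap over the triangle `{0 < r ≤ s ≤ t}`. -/
lemma my_triangle_swap {f g : ℝ → ℝ} {t : ℝ}
    (hf : IntegrableOn f (Set.Ioc 0 t)) (hg : IntegrableOn g (Set.Ioc 0 t)) :
    (∫ s in Set.Ioc (0:ℝ) t, f s * ∫ r in Set.Ioc (0:ℝ) s, g r)
      = ∫ r in Set.Ioc (0:ℝ) t, g r * ∫ s in Set.Icc r t, f s := by
  set μ := volume.restrict (Set.Ioc (0:ℝ) t) with hμ
  set D : Set (ℝ × ℝ) := {p : ℝ × ℝ | p.2 ≤ p.1} with hD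
  have hDm : MeasurableSet D := measurableSet_le measurable_snd measurable_fst
  have hint : Integrable (D.indicator (fun q : ℝ × ℝ => f q.1 * g q.2)) (μ.prod μ) :=
    (Integrable.mul_prod hf hg).indicator hDm
  have swap := MeasureTheory.integral_integral_swap
    (f := fun s r => D.indicator (fun q : ℝ × ℝ => f q.1 * g q.2) (s, r))
    (μ := μ) (ν := μ) hint
  have hL : (∫ s, ∫ r, D.indicator (fun q : ℝ × ℝ => f q.1 * g q.2) (s, r) ∂μ ∂μ)
      = ∫ s in Set.Ioc (0:ℝ) t, f s * ∫ r in Set.Ioc (0:ℝ) s, g r := by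
    rw [hμ]
    apply setIntegral_congr_fun measurableSet_Ioc
    intro s hs
    dsimp only
    have h1 : (fun r => D.indicator (fun q : ℝ × ℝ => f q.1 * g q.2) (s, r))
        = (Set.Iic s).indicator (fun r => f s * g r) := by
      funext r
      by_cases h : r ≤ s <;> simp [hD, Set.indicator, h]
    rw [h1, integral_indicator measurableSet_Iic,
      Measure.restrict_restrict measurableSet_Iic]
    have h2 : Set.Iic s ∩ Set.Ioc 0 t = Set.Ioc 0 s := by
      ext x
      simp only [Set.mem_inter_iff, Set.mem_Iic, Set.mem_Ioc]
      exact ⟨fun h => ⟨h.2.1, h.1⟩, fun h => ⟨h.2, h.1, h.2.trans hs.2⟩⟩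
    rw [h2, MeasureTheory.integral_const_mul]
  have hR : (∫ r, ∫ s, D.indicator (fun q : ℝ × ℝ => f q.1 * g q.2) (s, r) ∂μ ∂μ)
      = ∫ r in Set.Ioc (0:ℝ) t, g r * ∫ s in Set.Icc r t, f s := by
    rw [hμ]
    apply setIntegral_congr_fun measurableSet_Ioc
    intro r hr
    dsimp only
    have h1 : (fun s => D.indicator (fun q : ℝ × ℝ => f q.1 * g q.2) (s, r))
        = (Set.Ici r).indicator (fun s => f s * g r) := by
      funext s
      by_cases h : r ≤ s <;> simp [hD, Set.indicator, h]
    rw [h1, integral_indicator measurableSet_Ici,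
      Measure.restrict_restrict measurableSet_Ici]
    have h2 : Set.Ici r ∩ Set.Ioc 0 t = Set.Icc r t := by
      ext x
      simp only [Set.mem_inter_iff, Set.mem_Ici, Set.mem_Ioc, Set.mem_Icc]
      exact ⟨fun h => ⟨h.1, h.2.2⟩, fun h => ⟨h.1, lt_of_lt_of_le hr.1 h.1, h.2⟩⟩
    rw [h2, MeasureTheory.integral_mul_const, mul_comm]
  rw [← hL, swap, hR]

/-- `∫₀ᵗ a (∫₀ˢ a)ᵏ ds = (∫₀ᵗ a)^{k+1}/(k+1)` for integrable `a`. -/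
lemma my_primitive_pow_integral (a : ℝ → ℝ) (ha : Integrable a volume) :
    ∀ (k : ℕ) (t : ℝ), 0 ≤ t →
      (∫ s in (0:ℝ)..t, a s * (∫ r in (0:ℝ)..s, a r) ^ k)
        = (∫ r in (0:ℝ)..t, a r) ^ (k + 1) / (k + 1) := by
  set A : ℝ → ℝ := fun x => ∫ r in (0:ℝ)..x, a r with hAdef
  have hA : Continuous A := ha.continuous_primitive 0
  have hintk : ∀ (j : ℕ) (x y : ℝ),
      IntervalIntegrable (fun s => a s * A s ^ j) volume x y := fun j x y =>
    (ha.intervalIntegrable).mul_continuousOn ((hA.pow j).continuousOn)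
  intro k
  induction k with
  | zero => intro t ht; simp
  | succ k IH =>
    intro t ht
    have hIk : IntegrableOn (fun s => a s * A s ^ k) (Set.Ioc 0 t) :=
      (intervalIntegrable_iff_integrableOn_Ioc_of_le ht).1 (hintk k 0 t)
    have hIk1 : IntegrableOn (fun s => a s * A s ^ (k + 1)) (Set.Ioc 0 t) :=
      (intervalIntegrable_iff_integrableOn_Ioc_of_le ht).1 (hintk (k + 1) 0 t)
    have hIa : IntegrableOn a (Set.Ioc 0 t) := ha.integrableOn
    have hL0 : (∫ s in (0:ℝ)..t, a s * A s ^ (k + 1))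
        = ∫ s in Set.Ioc (0:ℝ) t, (a s * A s ^ k) * ∫ r in Set.Ioc (0:ℝ) s, a r := by
      rw [intervalIntegral.integral_of_le ht]
      apply setIntegral_congr_fun measurableSet_Ioc
      intro s hs
      dsimp only
      have h5 : (∫ r in Set.Ioc (0:ℝ) s, a r) = A s :=
        (intervalIntegral.integral_of_le hs.1.le).symm
      rw [h5]; ring
    have hswap := my_triangle_swap (f := fun s => a s * A s ^ k) (g := a) hIk hIa
    have hinner : ∀ r ∈ Set.Ioc (0:ℝ) t,
        (∫ s in Set.Icc r t, a s * A s ^ k)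
          = A t ^ (k + 1) / (k + 1) - A r ^ (k + 1) / (k + 1) := by
      intro r hr
      have h1 : (∫ s in Set.Icc r t, a s * A s ^ k)
          = ∫ s in r..t, a s * A s ^ k := by
        rw [integral_Icc_eq_integral_Ioc, intervalIntegral.integral_of_le hr.2]
      have h2 : (∫ s in (0:ℝ)..r, a s * A s ^ k) + (∫ s in r..t, a s * A s ^ k)
          = ∫ s in (0:ℝ)..t, a s * A s ^ k :=
        intervalIntegral.integral_add_adjacent_intervals (hintk k 0 r) (hintk k r t)
      have h3 : (∫ s in (0:ℝ)..t, a s * A s ^ k) = A t ^ (k + 1) / ((k:ℝ) + 1) := IH t ht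
      have h4 : (∫ s in (0:ℝ)..r, a s * A s ^ k) = A r ^ (k + 1) / ((k:ℝ) + 1) := IH r hr.1.le
      rw [h1]
      rw [h3, h4] at h2
      linarith
    have hmain : (∫ s in (0:ℝ)..t, a s * A s ^ (k + 1))
        = A t ^ (k + 1) / (k + 1) * A t
          - (∫ s in (0:ℝ)..t, a s * A s ^ (k + 1)) / (k + 1) := by
      have step1 : (∫ r in Set.Ioc (0:ℝ) t, a r * ∫ s in Set.Icc r t, a s * A s ^ k)
          = ∫ r in Set.Ioc (0:ℝ) t,
              (A t ^ (k + 1) / (k + 1) * a r - (a r * A r ^ (k + 1)) / (k + 1)) := by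
        apply setIntegral_congr_fun measurableSet_Ioc
        intro r hr
        dsimp only
        rw [hinner r hr]; ring
      conv_lhs => rw [hL0, hswap, step1]
      rw [integral_sub ((hIa.const_mul _)) (hIk1.div_const _),
        MeasureTheory.integral_const_mul, MeasureTheory.integral_div]
      have hAt : (∫ r in Set.Ioc (0:ℝ) t, a r) = A t :=
        (intervalIntegral.integral_of_le ht).symm
      have hAt2 : (∫ r in Set.Ioc (0:ℝ) t, a r * A r ^ (k + 1))
          = ∫ s in (0:ℝ)..t, a s * A s ^ (k + 1) :=
        (intervalIntegral.integral_of_le ht).symm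
      rw [hAt, hAt2]
    have hk1 : ((k:ℝ) + 1) ≠ 0 := by positivity
    have hk2 : ((k:ℝ) + 1 + 1) ≠ 0 := by positivity
    have hgoal : (∫ s in (0:ℝ)..t, a s * A s ^ (k + 1))
        = A t ^ (k + 1 + 1) / ((k:ℝ) + 1 + 1) := by
      rw [eq_div_iff hk2, pow_succ]
      field_simp at hmain
      linarith [hmain]
    push_cast
    exact hgoal

/-- Extended Gronwall inequality with a quadratic term: if
`u(t) ≤ c₀ + ∫₀ᵗ (c₁ u(s) + c₂ u(s)²) ds` a.e. on `[0,T]` and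
`∫₀ᵀ c₂ u(s) ds ≤ M`, then `u(t) ≤ c₀ e^{c₁ t} e^{M}` a.e. on `[0,T]`. -/
theorem extended_gronwall_quadratic
    (T c₀ c₁ c₂ M : ℝ) (hT : 0 < T)
    (hc₀ : 0 ≤ c₀) (hc₁ : 0 ≤ c₁) (hc₂ : 0 ≤ c₂) (hM : 0 ≤ M)
    (u : ℝ → ℝ) (hmeas : Measurable u)
    (hnonneg : ∀ t, 0 ≤ u t)
    (hbdd : ∃ B, ∀ t ∈ Set.Icc (0:ℝ) T, u t ≤ B)
    (hint : IntervalIntegrable u volume 0 T)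
    (hint2 : IntervalIntegrable (fun s => u s ^ 2) volume 0 T)
    (hineq : ∀ᵐ t ∂(volume.restrict (Set.Icc (0:ℝ) T)),
      u t ≤ c₀ + ∫ s in (0:ℝ)..t, (c₁ * u s + c₂ * u s ^ 2))
    (hMbound : (∫ s in (0:ℝ)..T, c₂ * u s) ≤ M) :
    ∀ᵐ t ∂(volume.restrict (Set.Icc (0:ℝ) T)),
      u t ≤ c₀ * exp (c₁ * t) * exp M := by
  obtain ⟨B, hB⟩ := hbdd
  set v : ℝ → ℝ := fun s => c₁ + c₂ * u s with hvdef
  have hv_int : IntervalIntegrable v volume 0 T :=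
    intervalIntegrable_const.add (hint.const_mul c₂)
  set a : ℝ → ℝ := (Set.Icc (0:ℝ) T).indicator v with hadef
  have ha_int : Integrable a volume := by
    rw [hadef, integrable_indicator_iff measurableSet_Icc]
    exact (intervalIntegrable_iff_integrableOn_Icc_of_le hT.le).1 hv_int
  have ha_nonneg : ∀ s, 0 ≤ a s := fun s =>
    Set.indicator_nonneg (fun s _ => add_nonneg hc₁ (mul_nonneg hc₂ (hnonneg s))) s
  have ha_eq : ∀ s ∈ Set.Icc (0:ℝ) T, a s = v s := fun s hs =>
    Set.indicator_of_mem hs v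
  set A : ℝ → ℝ := fun x => ∫ r in (0:ℝ)..x, a r with hAdef
  have hA_cont : Continuous A := ha_int.continuous_primitive 0
  have key : ∀ (k : ℕ) (t : ℝ), 0 ≤ t →
      (∫ s in (0:ℝ)..t, a s * A s ^ k) = A t ^ (k + 1) / (k + 1) :=
    my_primitive_pow_integral a ha_int
  -- A is bounded by c₁ t + M on [0, T]
  have hAle : ∀ t ∈ Set.Icc (0:ℝ) T, A t ≤ c₁ * t + M := by
    intro t ht
    have hsub : Set.uIcc (0:ℝ) t ⊆ Set.uIcc (0:ℝ) T := by
      rw [Set.uIcc_of_le ht.1, Set.uIcc_of_le hT.le]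
      exact Set.Icc_subset_Icc_right ht.2
    have h1 : A t = ∫ s in (0:ℝ)..t, v s := by
      rw [hAdef]
      exact intervalIntegral.integral_congr fun s hs => ha_eq s
        (by rw [Set.uIcc_of_le ht.1] at hs; exact (Set.Icc_subset_Icc_right ht.2) hs)
    have h2 : (∫ s in (0:ℝ)..t, v s)
        = c₁ * t + ∫ s in (0:ℝ)..t, c₂ * u s := by
      rw [hvdef, intervalIntegral.integral_add intervalIntegrable_const
        ((hint.const_mul c₂).mono_set hsub)]
      simp [mul_comm]
    have h3 : (∫ s in (0:ℝ)..t, c₂ * u s) ≤ ∫ s in (0:ℝ)..T, c₂ * u s := by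
      apply intervalIntegral.integral_mono_interval le_rfl ht.1 ht.2
      · filter_upwards with s
        exact mul_nonneg hc₂ (hnonneg s)
      · exact hint.const_mul c₂
    rw [h1, h2]
    linarith [h3.trans hMbound]
  have hA_nonneg : ∀ t, 0 ≤ t → 0 ≤ A t := fun t ht =>
    intervalIntegral.integral_nonneg ht fun s _ => ha_nonneg s
  -- the iteration
  have hP : ∀ n : ℕ, ∀ᵐ t ∂(volume.restrict (Set.Icc (0:ℝ) T)),
      u t ≤ c₀ * (∑ j ∈ Finset.range n, A t ^ j / (j.factorial : ℝ))
        + B * (A t ^ n / (n.factorial : ℝ)) := by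
    intro n
    induction n with
    | zero =>
      filter_upwards [ae_restrict_mem measurableSet_Icc] with t ht
      simpa using hB t ht
    | succ n IH =>
      filter_upwards [hineq, ae_restrict_mem measurableSet_Icc] with t hut ht
      set R : ℝ → ℝ := fun s =>
        c₀ * (∑ j ∈ Finset.range n, A s ^ j / (j.factorial : ℝ))
          + B * (A s ^ n / (n.factorial : ℝ)) with hRdef
      have hR_cont : Continuous R := by
        apply Continuous.add
        · exact continuous_const.mul (continuous_finset_sum _ fun j _ =>
            ((hA_cont.pow j).div_const _))
        · exact continuous_const.mul ((hA_cont.pow n).div_const _)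
      have hIH' : ∀ᵐ s ∂(volume.restrict (Set.Icc (0:ℝ) t)), u s ≤ R s :=
        ae_restrict_of_ae_restrict_of_subset (Set.Icc_subset_Icc_right ht.2) IH
      have hsub : Set.uIcc (0:ℝ) t ⊆ Set.uIcc (0:ℝ) T := by
        rw [Set.uIcc_of_le ht.1, Set.uIcc_of_le hT.le]
        exact Set.Icc_subset_Icc_right ht.2
      have hi1 : IntervalIntegrable (fun s => c₁ * u s + c₂ * u s ^ 2) volume 0 t :=
        ((hint.const_mul c₁).add (hint2.const_mul c₂)).mono_set hsub
      have hi2 : IntervalIntegrable (fun s => a s * R s) volume 0 t :=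
        ha_int.intervalIntegrable.mul_continuousOn hR_cont.continuousOn
      have hae : ∀ᵐ s ∂(volume.restrict (Set.Icc (0:ℝ) t)),
          c₁ * u s + c₂ * u s ^ 2 ≤ a s * R s := by
        filter_upwards [hIH', ae_restrict_mem measurableSet_Icc] with s hus hs
        have hsT : s ∈ Set.Icc (0:ℝ) T := Set.Icc_subset_Icc_right ht.2 hs
        rw [ha_eq s hsT]
        have hvs : v s = c₁ + c₂ * u s := rfl
        rw [hvs]
        have hv0 : 0 ≤ c₁ + c₂ * u s := add_nonneg hc₁ (mul_nonneg hc₂ (hnonneg s))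
        nlinarith [mul_le_mul_of_nonneg_left hus hv0]
      have hmono : (∫ s in (0:ℝ)..t, (c₁ * u s + c₂ * u s ^ 2))
          ≤ ∫ s in (0:ℝ)..t, a s * R s :=
        intervalIntegral.integral_mono_ae_restrict ht.1 hi1 hi2 hae
      -- compute the right-hand integral
      have hjint : ∀ j : ℕ, IntervalIntegrable
          (fun s => c₀ / (j.factorial : ℝ) * (a s * A s ^ j)) volume 0 t := fun j =>
        (ha_int.intervalIntegrable.mul_continuousOn
          ((hA_cont.pow j).continuousOn)).const_mul _
      have hFint : IntervalIntegrable
          (fun s => ∑ j ∈ Finset.range n, c₀ / (j.factorial : ℝ) * (a s * A s ^ j))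
          volume 0 t := by
        have h := IntervalIntegrable.sum (μ := volume) (a := (0:ℝ)) (b := t)
          (Finset.range n)
          (f := fun j => fun s => c₀ / (j.factorial : ℝ) * (a s * A s ^ j))
          (fun j _ => hjint j)
        have heq : (∑ j ∈ Finset.range n,
            fun s => c₀ / (j.factorial : ℝ) * (a s * A s ^ j))
            = fun s => ∑ j ∈ Finset.range n, c₀ / (j.factorial : ℝ) * (a s * A s ^ j) := by
          funext s
          simp [Finset.sum_apply]
        rwa [heq] at h
      have hGint : IntervalIntegrable
          (fun s => B / (n.factorial : ℝ) * (a s * A s ^ n)) volume 0 t :=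
        (ha_int.intervalIntegrable.mul_continuousOn
          ((hA_cont.pow n).continuousOn)).const_mul _
      have e1 : ∀ s, a s * R s
          = (∑ j ∈ Finset.range n, c₀ / (j.factorial : ℝ) * (a s * A s ^ j))
            + B / (n.factorial : ℝ) * (a s * A s ^ n) := by
        intro s
        have hRs : R s = c₀ * (∑ j ∈ Finset.range n, A s ^ j / (j.factorial : ℝ))
            + B * (A s ^ n / (n.factorial : ℝ)) := rfl
        rw [hRs, mul_add, Finset.mul_sum, Finset.mul_sum]
        congr 1
        · exact Finset.sum_congr rfl fun j _ => by ring
        · ring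
      have hexp : (∫ s in (0:ℝ)..t, a s * R s)
          = c₀ * (∑ j ∈ Finset.range n, A t ^ (j + 1) / ((j + 1).factorial : ℝ))
            + B * (A t ^ (n + 1) / ((n + 1).factorial : ℝ)) := by
        calc (∫ s in (0:ℝ)..t, a s * R s)
            = ∫ s in (0:ℝ)..t,
                ((∑ j ∈ Finset.range n, c₀ / (j.factorial : ℝ) * (a s * A s ^ j))
                  + B / (n.factorial : ℝ) * (a s * A s ^ n)) :=
              intervalIntegral.integral_congr fun s _ => e1 s
          _ = (∫ s in (0:ℝ)..t,
                ∑ j ∈ Finset.range n, c₀ / (j.factorial : ℝ) * (a s * A s ^ j))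
              + ∫ s in (0:ℝ)..t, B / (n.factorial : ℝ) * (a s * A s ^ n) :=
              intervalIntegral.integral_add hFint hGint
          _ = (∑ j ∈ Finset.range n,
                ∫ s in (0:ℝ)..t, c₀ / (j.factorial : ℝ) * (a s * A s ^ j))
              + B / (n.factorial : ℝ) * ∫ s in (0:ℝ)..t, a s * A s ^ n := by
              rw [intervalIntegral.integral_finset_sum fun j _ => hjint j,
                intervalIntegral.integral_const_mul]
          _ = c₀ * (∑ j ∈ Finset.range n, A t ^ (j + 1) / ((j + 1).factorial : ℝ))
              + B * (A t ^ (n + 1) / ((n + 1).factorial : ℝ)) := by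
              rw [key n t ht.1, Finset.mul_sum]
              congr 1
              · apply Finset.sum_congr rfl
                intro j _
                rw [intervalIntegral.integral_const_mul, key j t ht.1,
                  Nat.factorial_succ]
                push_cast
                rw [div_mul_div_comm, ← mul_div_assoc, mul_comm ((j.factorial : ℝ)) _]
              · rw [Nat.factorial_succ]
                push_cast
                rw [div_mul_div_comm, ← mul_div_assoc, mul_comm ((n.factorial : ℝ)) _]
      have hfin : u t ≤ c₀
          + (c₀ * (∑ j ∈ Finset.range n, A t ^ (j + 1) / ((j + 1).factorial : ℝ))
            + B * (A t ^ (n + 1) / ((n + 1).factorial : ℝ))) := by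
        calc u t ≤ c₀ + ∫ s in (0:ℝ)..t, (c₁ * u s + c₂ * u s ^ 2) := hut
          _ ≤ c₀ + ∫ s in (0:ℝ)..t, a s * R s := by linarith [hmono]
          _ = _ := by rw [hexp]
      rw [Finset.sum_range_succ']
      simp only [pow_zero, Nat.factorial_zero, Nat.cast_one, div_one]
      calc u t ≤ c₀
          + (c₀ * (∑ j ∈ Finset.range n, A t ^ (j + 1) / ((j + 1).factorial : ℝ))
            + B * (A t ^ (n + 1) / ((n + 1).factorial : ℝ))) := hfin
        _ = c₀ * ((∑ j ∈ Finset.range n, A t ^ (j + 1) / ((j + 1).factorial : ℝ)) + 1)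
            + B * (A t ^ (n + 1) / ((n + 1).factorial : ℝ)) := by ring
  -- pass to the limit
  filter_upwards [ae_all_iff.2 hP, ae_restrict_mem measurableSet_Icc] with t hPt ht
  have hA0 : 0 ≤ A t := hA_nonneg t ht.1
  have hstep : ∀ n : ℕ, u t ≤ c₀ * exp (A t) + B * (A t ^ n / (n.factorial : ℝ)) := by
    intro n
    have h1 := hPt n
    have h2 : (∑ j ∈ Finset.range n, A t ^ j / (j.factorial : ℝ)) ≤ exp (A t) :=
      Real.sum_le_exp_of_nonneg hA0 n
    nlinarith [h1, h2]
  have htend : Filter.Tendsto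
      (fun n : ℕ => c₀ * exp (A t) + B * (A t ^ n / (n.factorial : ℝ)))
      Filter.atTop (nhds (c₀ * exp (A t))) := by
    have := (FloorSemiring.tendsto_pow_div_factorial_atTop (A t)).const_mul B
    simpa using Filter.Tendsto.const_add (c₀ * exp (A t)) this
  have hlim : u t ≤ c₀ * exp (A t) := ge_of_tendsto' htend hstep
  calc u t ≤ c₀ * exp (A t) := hlim
    _ ≤ c₀ * exp (c₁ * t + M) :=
      mul_le_mul_of_nonneg_left (exp_le_exp.2 (hAle t ht)) hc₀
    _ = c₀ * exp (c₁ * t) * exp M := by rw [exp_add]; ring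
end
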